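/- For each finite nondecreasing sequence a = (a_0 ≤ ... ≤ a_m) with a_i ≤ b_i for all i, the event that the Bernoulli lattice path produces exactly the record sequence a before exiting the barrier (M = m and A = a) has probability exactly p^{m+1} · q^{b_{m+1}+1}. -/

import Mathlib

open MeasureTheory ProbabilityTheory

/-- `walkS X k ω` is the number of up-moves (`true`s) among the first `k+1` coordinates. -/
def walkS {Ω : Type*} (X : ℕ → Ω → Bool) (k : ℕ) (ω : Ω) : ℕ :=
  ∑ j ∈ Finset.range (k + 1), (X j ω).toNat

/-- `walkX X k ω = k - walkS X k ω` is the horizontal coordinate of the lattice path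
(started at `(-1,0)`) after `k+1` steps. -/
def walkX {Ω : Type*} (X : ℕ → Ω → Bool) (k : ℕ) (ω : Ω) : ℤ :=
  (k : ℤ) - (walkS X k ω : ℤ)

section AuxWalk

variable {Ω : Type*} {X : ℕ → Ω → Bool} {ω : Ω}

lemma walkS_zero : walkS X 0 ω = (X 0 ω).toNat := by simp [walkS]

lemma walkS_succ (k : ℕ) : walkS X (k+1) ω = walkS X k ω + (X (k+1) ω).toNat := by
  simp [walkS, Finset.sum_range_succ]

lemma walkS_le (k : ℕ) : walkS X k ω ≤ k + 1 := by
  calc walkS X k ω ≤ ∑ _j ∈ Finset.range (k+1), 1 :=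
        Finset.sum_le_sum (fun j _ => Bool.toNat_le _)
    _ = k + 1 := by simp

lemma walkS_mono {j k : ℕ} (h : j ≤ k) : walkS X j ω ≤ walkS X k ω := by
  unfold walkS
  exact Finset.sum_le_sum_of_subset (by simpa using Nat.add_le_add_right h 1)

lemma walkX_succ (k : ℕ) : walkX X (k+1) ω = walkX X k ω + (1 - ((X (k+1) ω).toNat : ℤ)) := by
  simp only [walkX, walkS_succ]; push_cast; ring

lemma walkX_mono {j k : ℕ} (h : j ≤ k) : walkX X j ω ≤ walkX X k ω := by
  induction k with
  | zero => interval_cases j; exact le_refl _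
  | succ k ih =>
    rcases Nat.lt_or_ge j (k+1) with h' | h'
    · have := ih (by omega)
      rw [walkX_succ]
      have : ((X (k+1) ω).toNat : ℤ) ≤ 1 := by cases X (k+1) ω <;> simp
      omega
    · have : j = k + 1 := by omega
      simp [this]

lemma walkX_succ_le (k : ℕ) : walkX X (k+1) ω ≤ walkX X k ω + 1 := by
  rw [walkX_succ]; have : (0:ℤ) ≤ ((X (k+1) ω).toNat : ℤ) := by positivity
  omega

lemma walkX_ge (k : ℕ) : -1 ≤ walkX X k ω := by
  have := walkS_le (X := X) (ω := ω) k
  simp only [walkX]; omega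

lemma X_eq_false_of_walkX_succ (k : ℕ) (h : walkX X (k+1) ω = walkX X k ω + 1) :
    X (k+1) ω = false := by
  rw [walkX_succ] at h
  cases hX : X (k+1) ω
  · rfl
  · rw [hX] at h; simp at h

lemma X_eq_true_of_walkX_succ (k : ℕ) (h : walkX X (k+1) ω = walkX X k ω) :
    X (k+1) ω = true := by
  rw [walkX_succ] at h
  cases hX : X (k+1) ω
  · rw [hX] at h; simp at h
  · rfl

lemma X_eq_true_of_walkS_full (k : ℕ) (h : walkS X k ω = k + 1) : X k ω = true := by
  cases k with
  | zero =>
    rw [walkS_zero] at h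
    cases hX : X 0 ω
    · rw [hX] at h; simp at h
    · rfl
  | succ k =>
    rw [walkS_succ] at h
    have := walkS_le (X := X) (ω := ω) k
    cases hX : X (k+1) ω
    · rw [hX] at h; simp at h; omega
    · rfl

lemma walkS_succ_le (k : ℕ) : walkS X (k+1) ω ≤ walkS X k ω + 1 := by
  rw [walkS_succ]; have := Bool.toNat_le (X (k+1) ω); omega

section
variable {m : ℕ} (a : Fin (m+1) → ℕ)

/-- position (step index) of the `i`-th right-move. -/
def wpos (m : ℕ) (a : Fin (m+1) → ℕ) (i : ℕ) : ℕ :=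
  a ⟨min i m, Nat.lt_succ_of_le (min_le_right _ _)⟩ + i

/-- the forced word: `false` (right-move) exactly at the positions `wpos`. -/
def wword (m : ℕ) (a : Fin (m+1) → ℕ) (j : ℕ) : Bool :=
  ! decide (∃ i ≤ m, wpos m a i = j)

def wcnt (m : ℕ) (a : Fin (m+1) → ℕ) (j : ℕ) : ℕ :=
  ((Finset.range (m+1)).filter fun i => wpos m a i ≤ j).card

variable (ha : Monotone a)

lemma wpos_coe (i : Fin (m+1)) : wpos m a i.1 = a i + i.1 := by
  have : min i.1 m = i.1 := Nat.min_eq_left (Nat.lt_succ_iff.mp i.2)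
  simp only [wpos]
  congr 1
  · congr 1
    exact Fin.ext this

include ha in
lemma wpos_strictMono : StrictMono (wpos m a) := by
  intro i j hij
  have h1 : a ⟨min i m, Nat.lt_succ_of_le (min_le_right _ _)⟩
      ≤ a ⟨min j m, Nat.lt_succ_of_le (min_le_right _ _)⟩ := by
    apply ha
    simp [Fin.le_def]
    omega
  simp only [wpos]
  omega

lemma wcnt_le (j : ℕ) : wcnt m a j ≤ m + 1 := by
  calc wcnt m a j ≤ (Finset.range (m+1)).card := Finset.card_le_card (Finset.filter_subset _ _)
    _ = m + 1 := Finset.card_range _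

include ha in
lemma wcnt_eq_zero {j : ℕ} (h : j < wpos m a 0) : wcnt m a j = 0 := by
  rw [wcnt, Finset.card_eq_zero, Finset.filter_eq_empty_iff]
  intro i _
  have : wpos m a 0 ≤ wpos m a i := (wpos_strictMono a ha).monotone (Nat.zero_le i)
  omega

include ha in
lemma wcnt_eq {j i : ℕ} (him : i ≤ m) (h1 : wpos m a i ≤ j)
    (h2 : i = m ∨ j < wpos m a (i+1)) : wcnt m a j = i + 1 := by
  have hfilter : (Finset.range (m+1)).filter (fun t => wpos m a t ≤ j) = Finset.range (i+1) := by
    ext t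
    simp only [Finset.mem_filter, Finset.mem_range]
    constructor
    · rintro ⟨htm, ht⟩
      by_contra hc
      push_neg at hc
      have : i < t := by omega
      rcases h2 with h2 | h2
      · omega
      · have : wpos m a (i+1) ≤ wpos m a t := (wpos_strictMono a ha).monotone (by omega)
        omega
    · intro ht
      have : wpos m a t ≤ wpos m a i := (wpos_strictMono a ha).monotone (by omega)
      exact ⟨by omega, by omega⟩
  rw [wcnt, hfilter, Finset.card_range]

include ha in
lemma wcnt_le_of_lt {j i : ℕ} (h : j < wpos m a i) : wcnt m a j ≤ i := by
  calc wcnt m a j ≤ (Finset.range i).card := by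
        apply Finset.card_le_card
        intro t ht
        simp only [Finset.mem_filter, Finset.mem_range] at ht ⊢
        by_contra hc
        push_neg at hc
        have : wpos m a i ≤ wpos m a t := (wpos_strictMono a ha).monotone hc
        omega
    _ = i := Finset.card_range i

include ha in
/-- trichotomy: find the greatest index whose position is `≤ j`. -/
lemma wpos_between {j : ℕ} (h0 : wpos m a 0 ≤ j) (hm : j ≤ wpos m a m)
    (hne : ∀ i ≤ m, wpos m a i ≠ j) :
    ∃ i < m, wpos m a i < j ∧ j < wpos m a (i+1) := by
  set i := Nat.findGreatest (fun t => wpos m a t ≤ j) m with hi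
  have hspec : wpos m a i ≤ j := Nat.findGreatest_spec (P := fun t => wpos m a t ≤ j) (Nat.zero_le m) h0
  have him : i ≤ m := Nat.findGreatest_le m
  have hilt : i < m := by
    rcases Nat.lt_or_ge i m with h | h
    · exact h
    · exfalso
      have him' : i = m := by omega
      rw [him'] at hspec
      exact hne m le_rfl (le_antisymm hspec hm)
  have hgt : ¬ (wpos m a (i+1) ≤ j) :=
    Nat.findGreatest_is_greatest (P := fun t => wpos m a t ≤ j) (n := m) (by rw [← hi]; omega) (by omega)
  exact ⟨i, hilt, lt_of_le_of_ne hspec (hne i him), by omega⟩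

end

section
variable {Ω : Type*} {X : ℕ → Ω → Bool} {ω : Ω} {m : ℕ} (a : Fin (m+1) → ℕ) (ha : Monotone a)

include ha in
lemma card_filter_pos_eq (j : ℕ) :
    ((Finset.range (m+1)).filter fun i => wpos m a i = j).card
      = if ∃ i ≤ m, wpos m a i = j then 1 else 0 := by
  split_ifs with h
  · obtain ⟨i, him, hij⟩ := h
    rw [Finset.card_eq_one]
    refine ⟨i, ?_⟩
    ext t
    simp only [Finset.mem_filter, Finset.mem_range, Finset.mem_singleton]
    constructor
    · rintro ⟨htm, ht⟩
      exact (wpos_strictMono a ha).injective (ht.trans hij.symm)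
    · rintro rfl
      exact ⟨by omega, hij⟩
  · push_neg at h
    rw [Finset.card_eq_zero, Finset.filter_eq_empty_iff]
    intro t ht
    simp only [Finset.mem_range] at ht
    exact h t (by omega)

lemma wword_toNat (j : ℕ) :
    (wword m a j).toNat = if ∃ i ≤ m, wpos m a i = j then 0 else 1 := by
  simp only [wword]
  by_cases h : ∃ i ≤ m, wpos m a i = j <;> simp [h]

include ha in
lemma wcnt_succ_eq (j : ℕ) :
    wcnt m a (j+1) = wcnt m a j + (if ∃ i ≤ m, wpos m a i = j+1 then 1 else 0) := by
  rw [← card_filter_pos_eq a ha (j+1)]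
  rw [wcnt, wcnt, ← Finset.card_union_of_disjoint]
  · congr 1
    ext t
    simp only [Finset.mem_filter, Finset.mem_union, Finset.mem_range]
    constructor
    · rintro ⟨htm, ht⟩
      rcases Nat.lt_or_ge (wpos m a t) (j+1) with h | h
      · exact Or.inl ⟨htm, by omega⟩
      · exact Or.inr ⟨htm, by omega⟩
    · rintro (⟨htm, ht⟩ | ⟨htm, ht⟩) <;> exact ⟨htm, by omega⟩
  · rw [Finset.disjoint_filter]
    intro t _ ht ht'
    omega

include ha in
lemma wcnt_zero_eq : wcnt m a 0 = if ∃ i ≤ m, wpos m a i = 0 then 1 else 0 := by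
  rw [← card_filter_pos_eq a ha 0, wcnt]
  congr 1
  ext t
  simp only [Finset.mem_filter, Finset.mem_range]
  omega

include ha in
lemma walkS_add_wcnt {j : ℕ} (hpre : ∀ j' ≤ j, X j' ω = wword m a j') :
    walkS X j ω + wcnt m a j = j + 1 := by
  induction j with
  | zero =>
    rw [walkS_zero, hpre 0 le_rfl, wword_toNat, wcnt_zero_eq a ha]
    split_ifs <;> simp
  | succ j ih =>
    rw [walkS_succ, hpre (j+1) le_rfl, wword_toNat, wcnt_succ_eq a ha]
    have := ih (fun j' hj' => hpre j' (by omega))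
    split_ifs <;> omega

end

section
variable {Ω : Type*} {X : ℕ → Ω → Bool}

lemma wpos_le_between {m : ℕ} (a : Fin (m+1) → ℕ) {j : ℕ} (h0 : wpos m a 0 ≤ j) :
    ∃ i ≤ m, wpos m a i ≤ j ∧ (i = m ∨ j < wpos m a (i + 1)) := by
  refine ⟨Nat.findGreatest (fun t => wpos m a t ≤ j) m, Nat.findGreatest_le m,
    Nat.findGreatest_spec (P := fun t => wpos m a t ≤ j) (Nat.zero_le m) h0, ?_⟩
  by_cases hcase : Nat.findGreatest (fun t => wpos m a t ≤ j) m = m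
  · exact Or.inl hcase
  · refine Or.inr ?_
    have hle : Nat.findGreatest (fun t => wpos m a t ≤ j) m ≤ m := Nat.findGreatest_le m
    have := Nat.findGreatest_is_greatest (P := fun t => wpos m a t ≤ j) (n := m)
      (Nat.lt_succ_self _) (by omega)
    simp only [Nat.succ_eq_add_one] at this
    omega

lemma event_eq {m : ℕ} (b : ℕ → ℕ) (hb : Monotone b) (a : Fin (m + 1) → ℕ)
    (ha : Monotone a) (hab : ∀ i, a i ≤ b i.1) :
    {ω | ∃ k : ℕ,
        b (1 + walkX X k ω).toNat < walkS X k ω ∧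
        (∀ j < k, walkS X j ω ≤ b (1 + walkX X j ω).toNat) ∧
        walkX X k ω = (m : ℤ) ∧
        ∀ i : Fin (m + 1), ∃ j ≤ k, walkX X j ω = (i.1 : ℤ) ∧
          (∀ j' < j, walkX X j' ω ≠ (i.1 : ℤ)) ∧ walkS X j ω = a i}
      = ⋂ j ∈ Finset.range (m + 2 + b (m + 1)), (X j) ⁻¹' {wword m a j} := by
  have hab' : ∀ i : ℕ, (h : i ≤ m) → a ⟨i, by omega⟩ ≤ b i := fun i h => hab ⟨i, by omega⟩
  have hcoe : ∀ i : ℕ, (h : i ≤ m) → wpos m a i = a ⟨i, by omega⟩ + i :=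
    fun i h => wpos_coe a ⟨i, by omega⟩
  have hposm_le : wpos m a m ≤ m + 1 + b (m + 1) := by
    have h1 := hab' m le_rfl
    have h2 : b m ≤ b (m + 1) := hb (by omega)
    have h3 := hcoe m le_rfl
    omega
  ext ω
  simp only [Set.mem_setOf_eq, Set.mem_iInter, Set.mem_preimage, Set.mem_singleton_iff,
    Finset.mem_range]
  constructor
  · -- forward: event ⟹ prefix forced
    rintro ⟨k, h1, h2, h3, h4⟩
    have hA : ∀ i : ℕ, i ≤ m → wpos m a i ≤ k ∧ walkX X (wpos m a i) ω = (i : ℤ) ∧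
        ∀ j' < wpos m a i, walkX X j' ω ≠ (i : ℤ) := by
      intro i him
      obtain ⟨j, hjk, hxj, hmin, hsj⟩ := h4 ⟨i, by omega⟩
      have hji : j = wpos m a i := by
        have := hcoe i him
        simp only [walkX] at hxj
        omega
      rw [hji] at hjk hxj hmin
      exact ⟨hjk, hxj, hmin⟩
    -- k ≥ 1
    have hk1 : 1 ≤ k := by
      by_contra hc
      have hk0 : k = 0 := by omega
      rw [hk0] at h3 h1
      simp only [walkX] at h3
      have hw0 : walkS X 0 ω ≤ 1 := walkS_le 0
      have hm0 : m = 0 ∧ walkS X 0 ω = 0 := by constructor <;> omega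
      rw [hm0.2] at h1
      have hone : (1 + walkX X 0 ω).toNat = 1 := by
        simp only [walkX, hm0.2]
        omega
      rw [hone] at h1
      omega
    -- value of walkS at k and of k itself
    have h2' := h2 (k - 1) (by omega)
    have hXle : walkX X (k - 1) ω ≤ (m : ℤ) := by
      have := walkX_mono (X := X) (ω := ω) (Nat.sub_le k 1)
      omega
    have htn : (1 + walkX X (k - 1) ω).toNat ≤ m + 1 := by omega
    have hble : b ((1 + walkX X (k - 1) ω).toNat) ≤ b (m + 1) := hb htn
    have hstep : walkS X k ω ≤ walkS X (k - 1) ω + 1 := by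
      have := walkS_succ_le (X := X) (ω := ω) (k - 1)
      rwa [Nat.sub_add_cancel hk1] at this
    have htk : (1 + walkX X k ω).toNat = m + 1 := by rw [h3]; omega
    rw [htk] at h1
    have hSk : walkS X k ω = b (m + 1) + 1 := by omega
    have hk : k = m + 1 + b (m + 1) := by
      simp only [walkX] at h3
      omega
    -- forced word
    intro j hj
    have hjk : j ≤ k := by omega
    by_cases hex : ∃ i ≤ m, wpos m a i = j
    · have hword : wword m a j = false := by simp [wword, hex]
      rw [hword]
      obtain ⟨i, him, hij⟩ := hex
      obtain ⟨_, hxj, hmin⟩ := hA i him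
      rw [hij] at hxj hmin
      match j, hj with
      | 0, _ =>
        simp only [walkX, Nat.cast_zero, walkS_zero] at hxj
        have hb0 : (X 0 ω).toNat = 0 := by
          have := Bool.toNat_le (X 0 ω)
          omega
        cases hX : X 0 ω
        · rfl
        · rw [hX] at hb0; simp at hb0
      | (j' + 1), _ =>
        have hprev : walkX X j' ω ≠ (i : ℤ) := hmin j' (by omega)
        have hup : walkX X j' ω ≤ walkX X (j' + 1) ω := walkX_mono (by omega)
        have hdn : walkX X (j' + 1) ω ≤ walkX X j' ω + 1 := walkX_succ_le j'
        exact X_eq_false_of_walkX_succ j' (by omega)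
    · have hword : wword m a j = true := by
        simp only [wword, Bool.not_eq_true']
        simpa using hex
      rw [hword]
      push_neg at hex
      obtain ⟨hp0, hx0, hmin0⟩ := hA 0 (by omega)
      by_cases h0 : j < wpos m a 0
      · have hle : walkX X j ω ≤ walkX X (wpos m a 0) ω := walkX_mono (by omega)
        rw [hx0] at hle
        have hne : walkX X j ω ≠ ((0 : ℕ) : ℤ) := hmin0 j h0
        have hge : -1 ≤ walkX X j ω := walkX_ge j
        have hfull : walkS X j ω = j + 1 := by
          simp only [walkX] at hle hne hge ⊢
          simp only [Nat.cast_zero] at hle hne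
          omega
        exact X_eq_true_of_walkS_full j hfull
      · push_neg at h0
        by_cases hm' : j ≤ wpos m a m
        · obtain ⟨i, hilt, hlo, hhi⟩ := wpos_between a ha h0 hm' hex
          obtain ⟨hpi_le, hxi, _⟩ := hA i (by omega)
          obtain ⟨hpi1_le, hxi1, hmini1⟩ := hA (i + 1) (by omega)
          have key : ∀ j'', wpos m a i ≤ j'' → j'' < wpos m a (i + 1) →
              walkX X j'' ω = (i : ℤ) := by
            intro j'' hlo'' hhi''
            have hge : walkX X (wpos m a i) ω ≤ walkX X j'' ω := walkX_mono hlo''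
            have hle : walkX X j'' ω ≤ walkX X (wpos m a (i + 1)) ω :=
              walkX_mono (le_of_lt hhi'')
            have hne := hmini1 j'' hhi''
            rw [hxi] at hge
            rw [hxi1] at hle
            push_cast at hne hle ⊢
            omega
          have hj1 : 1 ≤ j := by omega
          have e1 : walkX X j ω = (i : ℤ) := key j (by omega) hhi
          have e2 : walkX X (j - 1) ω = (i : ℤ) := key (j - 1) (by omega) (by omega)
          have hres := X_eq_true_of_walkX_succ (X := X) (ω := ω) (j - 1) (by
            rw [Nat.sub_add_cancel hj1, e1, e2])
          rwa [Nat.sub_add_cancel hj1] at hres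
        · push_neg at hm'
          obtain ⟨hpm_le, hxm, _⟩ := hA m le_rfl
          have key : ∀ j'', wpos m a m ≤ j'' → j'' ≤ k → walkX X j'' ω = (m : ℤ) := by
            intro j'' hlo'' hhi''
            have hge := walkX_mono (X := X) (ω := ω) hlo''
            have hle := walkX_mono (X := X) (ω := ω) hhi''
            rw [hxm] at hge
            rw [h3] at hle
            omega
          have hj1 : 1 ≤ j := by omega
          have e1 : walkX X j ω = (m : ℤ) := key j (by omega) hjk
          have e2 : walkX X (j - 1) ω = (m : ℤ) := key (j - 1) (by omega) (by omega)
          have hres := X_eq_true_of_walkX_succ (X := X) (ω := ω) (j - 1) (by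
            rw [Nat.sub_add_cancel hj1, e1, e2])
          rwa [Nat.sub_add_cancel hj1] at hres
  · -- backward: prefix ⟹ event
    intro hpre
    set k := m + 1 + b (m + 1) with hkdef
    have hS : ∀ j ≤ k, walkS X j ω + wcnt m a j = j + 1 := by
      intro j hj
      exact walkS_add_wcnt a ha (fun j' hj' => hpre j' (by omega))
    have hXc : ∀ j ≤ k, walkX X j ω = (wcnt m a j : ℤ) - 1 := by
      intro j hj
      have := hS j hj
      simp only [walkX]
      omega
    refine ⟨k, ?_, ?_, ?_, ?_⟩
    · -- exited at k
      have hcnt : wcnt m a k = m + 1 := wcnt_eq a ha le_rfl (by omega) (Or.inl rfl)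
      have hSk : walkS X k ω = b (m + 1) + 1 := by
        have := hS k le_rfl
        omega
      have hXk : walkX X k ω = (m : ℤ) := by
        rw [hXc k le_rfl, hcnt]
        push_cast
        ring
      rw [hXk, hSk]
      have hone : (1 + (m : ℤ)).toNat = m + 1 := by omega
      rw [hone]
      omega
    · -- never exited before k
      intro j hj
      by_cases h0 : j < wpos m a 0
      · have hcnt : wcnt m a j = 0 := wcnt_eq_zero a ha h0
        have hSj : walkS X j ω = j + 1 := by have := hS j (by omega); omega
        have hXj : walkX X j ω = -1 := by rw [hXc j (by omega), hcnt]; ring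
        rw [hXj, hSj]
        have hone : ((1 : ℤ) + -1).toNat = 0 := by omega
        rw [hone]
        have hb0 := hab' 0 (by omega)
        have hc0 := hcoe 0 (by omega)
        omega
      · push_neg at h0
        obtain ⟨i, him, hspec, h2⟩ := wpos_le_between a h0
        have hcnt : wcnt m a j = i + 1 := wcnt_eq a ha him hspec h2
        have hSj : walkS X j ω = j - i := by have := hS j (by omega); omega
        have hXj : walkX X j ω = (i : ℤ) := by
          rw [hXc j (by omega), hcnt]
          push_cast
          ring
        rw [hXj, hSj]
        have htn : (1 + (i : ℤ)).toNat = i + 1 := by omega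
        rw [htn]
        rcases h2 with h2 | h2
        · rw [h2]
          omega
        · by_cases hcase : i = m
          · rw [hcase]
            omega
          · have him1 : i + 1 ≤ m := by omega
            have hc1 := hcoe (i + 1) him1
            have hb1 := hab' (i + 1) him1
            omega
    · -- walkX at k is m
      have hcnt : wcnt m a k = m + 1 := wcnt_eq a ha le_rfl (by omega) (Or.inl rfl)
      rw [hXc k le_rfl, hcnt]
      push_cast
      ring
    · -- first-entry heights
      intro i
      have hip : wpos m a i.1 ≤ wpos m a m := (wpos_strictMono a ha).monotone (by omega)
      have hple : wpos m a i.1 ≤ k := by omega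
      have hcnt : wcnt m a (wpos m a i.1) = i.1 + 1 := by
        apply wcnt_eq a ha (by omega) le_rfl
        by_cases hcase : i.1 = m
        · exact Or.inl hcase
        · exact Or.inr ((wpos_strictMono a ha) (by omega))
      refine ⟨wpos m a i.1, hple, ?_, ?_, ?_⟩
      · rw [hXc _ hple, hcnt]
        push_cast
        ring
      · intro j' hj'
        have hcle : wcnt m a j' ≤ i.1 := wcnt_le_of_lt a ha hj'
        rw [hXc j' (by omega)]
        intro hc
        omega
      · have h5 := hS (wpos m a i.1) hple
        have hco := wpos_coe a i
        omega
end

open MeasureTheory ProbabilityTheory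


end AuxWalk

/-- The event that the walk exits the barrier at a time when its horizontal coordinate is
exactly `m` (so `M = m`), having first entered each column `i ≤ m` at height `a i`
(so `A = a`), has probability `p^(m+1) * q^(b (m+1) + 1)`. -/
theorem stmt_16 {Ω : Type*} [MeasurableSpace Ω] (μ : Measure Ω) [IsProbabilityMeasure μ]
    (q : ℝ) (hq : q ∈ Set.Ioo (0 : ℝ) 1) (p : ℝ) (hp : p = 1 - q)
    (X : ℕ → Ω → Bool) (hmeas : ∀ i, Measurable (X i))
    (hindep : iIndepFun X μ)
    (hdist : ∀ i, μ {ω | X i ω = true} = ENNReal.ofReal q)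
    (b : ℕ → ℕ) (hb : Monotone b)
    (m : ℕ) (a : Fin (m + 1) → ℕ) (ha : Monotone a) (hab : ∀ i, a i ≤ b i.1) :
    μ {ω | ∃ k : ℕ,
        b (1 + walkX X k ω).toNat < walkS X k ω ∧
        (∀ j < k, walkS X j ω ≤ b (1 + walkX X j ω).toNat) ∧
        walkX X k ω = (m : ℤ) ∧
        ∀ i : Fin (m + 1), ∃ j ≤ k, walkX X j ω = (i.1 : ℤ) ∧
          (∀ j' < j, walkX X j' ω ≠ (i.1 : ℤ)) ∧ walkS X j ω = a i} =
      ENNReal.ofReal (p ^ (m + 1) * q ^ (b (m + 1) + 1)) := by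
  have hp0 : 0 ≤ p := by rw [hp]; linarith [hq.2]
  have hq0 : 0 ≤ q := hq.1.le
  rw [event_eq b hb a ha hab]
  set N := m + 2 + b (m + 1) with hN
  -- independence: measure of the intersection is the product
  have hprod := (iIndepFun_iff_measure_inter_preimage_eq_mul.mp hindep) (Finset.range N)
    (sets := fun j => {wword m a j}) (fun j _ => measurableSet_singleton _)
  rw [hprod]
  -- individual probabilities
  have hq' : ∀ j, μ (X j ⁻¹' {true}) = ENNReal.ofReal q := by
    intro j
    rw [← hdist j]
    congr 1
  have hp' : ∀ j, μ (X j ⁻¹' {false}) = ENNReal.ofReal p := by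
    intro j
    have hc : X j ⁻¹' {false} = (X j ⁻¹' {true})ᶜ := by
      ext ω
      cases h : X j ω <;> simp [h]
    rw [hc, measure_compl ((hmeas j) (measurableSet_singleton true)) (measure_ne_top μ _),
      hq' j, measure_univ, hp, ENNReal.ofReal_sub _ hq0, ENNReal.ofReal_one]
  have hfac : ∀ j, μ (X j ⁻¹' {wword m a j})
      = if wword m a j = true then ENNReal.ofReal q else ENNReal.ofReal p := by
    intro j
    cases h : wword m a j <;> simp [h, hq', hp']
  calc ∏ j ∈ Finset.range N, μ (X j ⁻¹' {wword m a j})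
      = ∏ j ∈ Finset.range N,
          (if wword m a j = true then ENNReal.ofReal q else ENNReal.ofReal p) := by
        exact Finset.prod_congr rfl (fun j _ => hfac j)
    _ = (∏ j ∈ (Finset.range N).filter (fun j => wword m a j = true), ENNReal.ofReal q) *
        ∏ j ∈ (Finset.range N).filter (fun j => ¬ wword m a j = true), ENNReal.ofReal p :=
        Finset.prod_ite _ _
    _ = ENNReal.ofReal q ^ ((Finset.range N).filter (fun j => wword m a j = true)).card *
        ENNReal.ofReal p ^ ((Finset.range N).filter (fun j => ¬ wword m a j = true)).card := by
        rw [Finset.prod_const, Finset.prod_const]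
    _ = ENNReal.ofReal (p ^ (m + 1) * q ^ (b (m + 1) + 1)) := by
        have hposm_lt : ∀ i ≤ m, wpos m a i < N := by
          intro i hi
          have h1 : wpos m a i ≤ wpos m a m := (wpos_strictMono a ha).monotone hi
          have h2 : wpos m a m = a ⟨m, by omega⟩ + m := wpos_coe a ⟨m, by omega⟩
          have h3 : a ⟨m, by omega⟩ ≤ b m := hab ⟨m, by omega⟩
          have h4 : b m ≤ b (m + 1) := hb (by omega)
          omega
        have hfalse : (Finset.range N).filter (fun j => ¬ wword m a j = true)
            = (Finset.range (m + 1)).image (wpos m a) := by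
          ext j
          simp only [Finset.mem_filter, Finset.mem_range, Finset.mem_image, wword,
            Bool.not_eq_true', Bool.not_eq_true, Bool.not_eq_false', decide_eq_true_eq,
            Bool.not_not]
          constructor
          · rintro ⟨hjN, hex⟩
            have : ∃ i ≤ m, wpos m a i = j := by simpa using hex
            obtain ⟨i, hi, hij⟩ := this
            exact ⟨i, by omega, hij⟩
          · rintro ⟨i, hi, hij⟩
            refine ⟨by have := hposm_lt i (by omega); omega, ?_⟩
            simp only [decide_eq_false_iff_not, not_not] at *
            exact (by simpa using (⟨i, by omega, hij⟩ : ∃ i ≤ m, wpos m a i = j))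
        have hcardF : ((Finset.range N).filter (fun j => ¬ wword m a j = true)).card = m + 1 := by
          rw [hfalse, Finset.card_image_of_injective _ (wpos_strictMono a ha).injective,
            Finset.card_range]
        have hcardT : ((Finset.range N).filter (fun j => wword m a j = true)).card
            = b (m + 1) + 1 := by
          have := Finset.card_filter_add_card_filter_not (s := Finset.range N)
            (p := fun j => wword m a j = true)
          rw [Finset.card_range] at this
          omega
        rw [hcardF, hcardT, ← ENNReal.ofReal_pow hq0, ← ENNReal.ofReal_pow hp0,
          ← ENNReal.ofReal_mul (pow_nonneg hq0 _), mul_comm]
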